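/- Let ψ be a monotone flow on an ordered space Y, and suppose p ≺ q are nonstationary periodic points with minimal periods r and s respectively, such that O(p) ≺ O(q) fails. Then the order interval [p,q] is resonant: for any two nonstationary periodic points u, v ∈ [p,q], the ratio of their minimal periods is a positive rational number. -/

import Mathlib

/-- A point has minimal period `r` for the flow `φ` if `r` is the least
positive time fixing it. -/
def MinPeriod {Y : Type*} (φ : ℝ → Y → Y) (p : Y) (r : ℝ) : Prop :=
  IsLeast {t : ℝ | 0 < t ∧ φ t p = p} r

namespace IntervalResonantAux

/-- Commensurability of two reals. -/
def Comm (a b : ℝ) : Prop := ∃ m : ℚ, m ≠ 0 ∧ a = (m : ℝ) * b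

lemma Comm.symm {a b : ℝ} (h : Comm a b) : Comm b a := by
  obtain ⟨m, hm, h⟩ := h
  refine ⟨m⁻¹, inv_ne_zero hm, ?_⟩
  have hm' : (m : ℝ) ≠ 0 := by exact_mod_cast hm
  rw [h]
  push_cast
  field_simp

lemma Comm.trans {a b c : ℝ} (h1 : Comm a b) (h2 : Comm b c) : Comm a c := by
  obtain ⟨m, hm, rfl⟩ := h1
  obtain ⟨n, hn, rfl⟩ := h2
  exact ⟨m * n, mul_ne_zero hm hn, by push_cast; ring⟩

/-- A closed set containing `0` and stable under translation by `±a`, `±b`, with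
`a/b` incommensurable, is everything. -/
lemma eq_univ_of_closed (a b : ℝ) (ha : a ≠ 0) (hb : b ≠ 0) (hcomm : ¬ Comm a b)
    (T : Set ℝ) (hT : IsClosed T) (h0 : (0:ℝ) ∈ T)
    (hpa : ∀ t ∈ T, t + a ∈ T) (hma : ∀ t ∈ T, t - a ∈ T)
    (hpb : ∀ t ∈ T, t + b ∈ T) (hmb : ∀ t ∈ T, t - b ∈ T) :
    ∀ t, t ∈ T := by
  have hstep : ∀ (c : ℝ), (∀ t ∈ T, t + c ∈ T) → (∀ t ∈ T, t - c ∈ T) →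
      ∀ (n : ℤ), ∀ t ∈ T, t + n * c ∈ T := by
    intro c hp hm n
    induction n using Int.induction_on with
    | zero => simpa using fun t ht => ht
    | succ k ih =>
        intro t ht
        have := hp _ (ih t ht)
        convert this using 1
        push_cast
        ring
    | pred k ih =>
        intro t ht
        have := hm _ (ih t ht)
        convert this using 1
        push_cast
        ring
  have hsub : ((AddSubgroup.closure {a, b} : AddSubgroup ℝ) : Set ℝ) ⊆ T := by
    intro x hx
    rw [SetLike.mem_coe, AddSubgroup.mem_closure_pair] at hx
    obtain ⟨m, n, rfl⟩ := hx
    have h1 := hstep a hpa hma m 0 h0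
    have h2 := hstep b hpb hmb n _ h1
    have he : m • a + n • b = 0 + (m : ℝ) * a + (n : ℝ) * b := by
      push_cast [zsmul_eq_mul]; ring
    rwa [he]
  have hdense : Dense ((AddSubgroup.closure {a, b} : AddSubgroup ℝ) : Set ℝ) := by
    rcases AddSubgroup.dense_or_cyclic (AddSubgroup.closure {a, b}) with h | ⟨g, hg⟩
    · exact h
    · exfalso
      have hag : a ∈ AddSubgroup.closure ({g} : Set ℝ) := by
        rw [← hg]; exact AddSubgroup.subset_closure (by simp)
      have hbg : b ∈ AddSubgroup.closure ({g} : Set ℝ) := by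
        rw [← hg]; exact AddSubgroup.subset_closure (by simp)
      obtain ⟨m, hm⟩ := AddSubgroup.mem_closure_singleton.1 hag
      obtain ⟨n, hn⟩ := AddSubgroup.mem_closure_singleton.1 hbg
      rw [zsmul_eq_mul] at hm hn
      have hn0 : (n : ℝ) ≠ 0 := by
        intro h; apply hb; rw [← hn, h, zero_mul]
      have hm0 : (m : ℝ) ≠ 0 := by
        intro h; apply ha; rw [← hm, h, zero_mul]
      apply hcomm
      have hmZ : m ≠ 0 := fun h => hm0 (by simp [h])
      have hnZ : n ≠ 0 := fun h => hn0 (by simp [h])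
      refine ⟨(m : ℚ) / (n : ℚ), ?_, ?_⟩
      · exact div_ne_zero (by exact_mod_cast hmZ) (by exact_mod_cast hnZ)
      · rw [← hm, ← hn]
        push_cast
        field_simp
  intro t
  have hdT : Dense T := hdense.mono hsub
  have : closure T = Set.univ := hdT.closure_eq
  rw [hT.closure_eq] at this
  rw [this]
  trivial

section Flow

variable {Y : Type*} [TopologicalSpace Y] [PartialOrder Y] [OrderClosedTopology Y]
  {φ : ℝ → Y → Y}

variable (hcont : Continuous fun z : ℝ × Y => φ z.1 z.2)
  (hzero : ∀ x, φ 0 x = x)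
  (hadd : ∀ s t x, φ (s + t) x = φ s (φ t x))
  (hmono : ∀ t : ℝ, Monotone (φ t))

include hzero hadd in
lemma cancel (t : ℝ) (x : Y) : φ (-t) (φ t x) = x := by
  rw [← hadd, neg_add_cancel, hzero]

include hzero hadd in
lemma fix_neg {t : ℝ} {x : Y} (h : φ t x = x) : φ (-t) x = x := by
  conv_lhs => rw [← h]
  exact cancel hzero hadd t x

include hcont hzero hadd hmono in
lemma forall_le_flow {x y : Y} {a b : ℝ}
    (ha : a ≠ 0) (hb : b ≠ 0)
    (hxa : φ a x = x) (hyb : φ b y = y) (hcomm : ¬ Comm a b)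
    (hxy : x ≤ y) : ∀ t, x ≤ φ t y := by
  have hconty : Continuous fun t : ℝ => φ t y :=
    hcont.comp (continuous_id.prodMk continuous_const)
  set T := {t : ℝ | x ≤ φ t y} with hTdef
  have hT : IsClosed T := by
    have : T = (fun t : ℝ => φ t y) ⁻¹' Set.Ici x := rfl
    rw [this]
    exact (isClosed_Ici).preimage hconty
  have h0 : (0:ℝ) ∈ T := by simp only [hTdef, Set.mem_setOf_eq, hzero]; exact hxy
  have hxa' : φ (-a) x = x := fix_neg hzero hadd hxa
  have hyb' : φ (-b) y = y := fix_neg hzero hadd hyb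
  have hstepa : ∀ c : ℝ, φ c x = x → ∀ t ∈ T, t + c ∈ T := by
    intro c hc t ht
    have : φ c x ≤ φ c (φ t y) := hmono c ht
    rw [hc, ← hadd] at this
    simpa [hTdef, add_comm] using this
  have hstepb : ∀ c : ℝ, φ c y = y → ∀ t ∈ T, t + c ∈ T := by
    intro c hc t ht
    have : φ (t + c) y = φ t y := by rw [hadd, hc]
    simpa [hTdef, this] using ht
  have := eq_univ_of_closed a b ha hb hcomm T hT h0
    (hstepa a hxa) (fun t ht => by simpa [sub_eq_add_neg] using hstepa (-a) hxa' t ht)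
    (hstepb b hyb) (fun t ht => by simpa [sub_eq_add_neg] using hstepb (-b) hyb' t ht)
  exact this

include hcont hzero hadd hmono in
lemma forall_flow_le {x y : Y} {a b : ℝ}
    (ha : a ≠ 0) (hb : b ≠ 0)
    (hxa : φ a x = x) (hyb : φ b y = y) (hcomm : ¬ Comm a b)
    (hxy : x ≤ y) : ∀ t, φ t x ≤ y := by
  have hcontx : Continuous fun t : ℝ => φ t x :=
    hcont.comp (continuous_id.prodMk continuous_const)
  set T := {t : ℝ | φ t x ≤ y} with hTdef
  have hT : IsClosed T := by
    have : T = (fun t : ℝ => φ t x) ⁻¹' Set.Iic y := rfl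
    rw [this]
    exact (isClosed_Iic).preimage hcontx
  have h0 : (0:ℝ) ∈ T := by simp only [hTdef, Set.mem_setOf_eq, hzero]; exact hxy
  have hxa' : φ (-a) x = x := fix_neg hzero hadd hxa
  have hyb' : φ (-b) y = y := fix_neg hzero hadd hyb
  have hstepa : ∀ c : ℝ, φ c x = x → ∀ t ∈ T, t + c ∈ T := by
    intro c hc t ht
    have : φ (t + c) x = φ t x := by rw [hadd, hc]
    simpa [hTdef, this] using ht
  have hstepb : ∀ c : ℝ, φ c y = y → ∀ t ∈ T, t + c ∈ T := by
    intro c hc t ht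
    have : φ c (φ t x) ≤ φ c y := hmono c ht
    rw [hc, ← hadd] at this
    simpa [hTdef, add_comm] using this
  exact eq_univ_of_closed a b ha hb hcomm T hT h0
    (hstepa a hxa) (fun t ht => by simpa [sub_eq_add_neg] using hstepa (-a) hxa' t ht)
    (hstepb b hyb) (fun t ht => by simpa [sub_eq_add_neg] using hstepb (-b) hyb' t ht)

include hzero hadd in
/-- If `x = φ c y` then `x` and `y` have the same minimal period. -/
lemma minPeriod_eq_of_orbit {x y : Y} {a b c : ℝ}
    (hx : MinPeriod φ x a) (hy : MinPeriod φ y b) (h : x = φ c y) : a = b := by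
  have hy' : y = φ (-c) x := by rw [h, cancel hzero hadd]
  have h1 : φ b x = x := by
    rw [h, ← hadd, add_comm, hadd, hy.1.2]
  have h2 : φ a y = y := by
    rw [hy', ← hadd, add_comm, hadd, hx.1.2]
  exact le_antisymm (hx.2 ⟨hy.1.1, h1⟩) (hy.2 ⟨hx.1.1, h2⟩)

end Flow

end IntervalResonantAux

open IntervalResonantAux in
/-- If `p ≺ q` are nonstationary periodic points for a monotone flow and
`O(p) ≺ O(q)` fails, then the order interval `[p,q]` is resonant: ratios of
minimal periods of nonstationary periodic points in it are positive rationals. -/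
theorem interval_resonant
    {Y : Type*} [TopologicalSpace Y] [PartialOrder Y] [OrderClosedTopology Y]
    (φ : ℝ → Y → Y)
    (hcont : Continuous fun z : ℝ × Y => φ z.1 z.2)
    (hzero : ∀ x, φ 0 x = x)
    (hadd : ∀ s t x, φ (s + t) x = φ s (φ t x))
    (hmono : ∀ t : ℝ, Monotone (φ t))
    (p q : Y) (r s : ℝ)
    (hrp : MinPeriod φ p r) (hr : 0 < r)
    (hsq : MinPeriod φ q s) (hs : 0 < s)
    (hpq : p < q)
    (hnot : ¬ ∀ a b : ℝ, φ a p < φ b q) :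
    ∀ u ∈ Set.Icc p q, ∀ v ∈ Set.Icc p q, ∀ ru rv : ℝ,
      MinPeriod φ u ru → MinPeriod φ v rv →
      ∃ m : ℚ, 0 < m ∧ (ru / rv : ℝ) = (m : ℝ) := by
  -- orbit equality forces period equality
  have horb : ∀ (a b : ℝ), φ a p = φ b q → r = s := by
    intro a b hab
    have hc : p = φ (b - a) q := by
      have := congrArg (φ (-a)) hab
      rw [cancel hzero hadd] at this
      rw [this, ← hadd]
      ring_nf
    exact minPeriod_eq_of_orbit hzero hadd hrp hsq hc
  -- Step B : r and s are commensurable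
  have hrs : Comm r s := by
    by_contra hirr
    apply hnot
    have H : ∀ t, p ≤ φ t q :=
      forall_le_flow hcont hzero hadd hmono (ne_of_gt hr) (ne_of_gt hs)
        hrp.1.2 hsq.1.2 hirr (le_of_lt hpq)
    intro a b
    have hle : φ a p ≤ φ b q := by
      have := hmono a (H (b - a))
      rw [← hadd] at this
      convert this using 2
      ring
    refine lt_of_le_of_ne hle ?_
    intro heq
    exact hirr ⟨1, one_ne_zero, by rw [horb a b heq]; norm_num⟩
  -- Step A : every nonstationary periodic point of [p,q] has period
  -- commensurable with r or s
  have hA : ∀ w ∈ Set.Icc p q, ∀ rw : ℝ, MinPeriod φ w rw →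
      Comm rw r ∨ Comm rw s := by
    intro w hw rw hmw
    by_contra h
    push_neg at h
    obtain ⟨h1, h2⟩ := h
    have hrw : 0 < rw := hmw.1.1
    apply hnot
    have H1 : ∀ t, p ≤ φ t w :=
      forall_le_flow hcont hzero hadd hmono (ne_of_gt hr) (ne_of_gt hrw)
        hrp.1.2 hmw.1.2 (fun hc => h1 hc.symm) hw.1
    have H2 : ∀ t, φ t w ≤ q :=
      forall_flow_le hcont hzero hadd hmono (ne_of_gt hrw) (ne_of_gt hs)
        hmw.1.2 hsq.1.2 h2 hw.2
    -- hence all of O(p) is below all of O(q)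
    have Hle : ∀ a b : ℝ, φ a p ≤ φ b q := by
      intro a b
      have hl : φ a p ≤ w := by
        have := hmono a (H1 (-a))
        rw [← hadd, add_neg_cancel, hzero] at this
        exact this
      have hr' : w ≤ φ b q := by
        have := hmono b (H2 (-b))
        rw [← hadd, add_neg_cancel] at this
        rw [hzero] at this
        exact this
      exact le_trans hl hr'
    intro a b
    refine lt_of_le_of_ne (Hle a b) ?_
    intro heq
    -- equality would force `w` to be a rest point
    have hc : p = φ (b - a) q := by
      have := congrArg (φ (-a)) heq
      rw [cancel hzero hadd] at this
      rw [this, ← hadd]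
      ring_nf
    have hq' : q = φ (a - b) p := by
      have := congrArg (φ (-(b - a))) hc
      rw [cancel hzero hadd] at this
      rw [← this]
      ring_nf
    have hfix : ∀ t, φ t w = p := by
      intro t
      refine le_antisymm ?_ (H1 t)
      have h3 : φ (t - (b - a)) w ≤ q := H2 _
      have := hmono (b - a) h3
      rw [← hadd] at this
      have he : (b - a) + (t - (b - a)) = t := by ring
      rw [he] at this
      have h4 : φ (b - a) q = p := by rw [hc]
      rwa [h4] at this
    have hwp : w = p := by
      have := hfix 0
      rwa [hzero] at this
    have : rw ≤ rw / 2 := by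
      refine hmw.2 ⟨by linarith, ?_⟩
      rw [hfix (rw/2), hwp]
    linarith
  -- conclude
  intro u hu v hv ru rv hmu hmv
  have hru : 0 < ru := hmu.1.1
  have hrv : 0 < rv := hmv.1.1
  have huv : Comm ru rv := by
    rcases hA u hu ru hmu with hu' | hu' <;> rcases hA v hv rv hmv with hv' | hv'
    · exact hu'.trans hv'.symm
    · exact (hu'.trans hrs).trans hv'.symm
    · exact (hu'.trans hrs.symm).trans hv'.symm
    · exact hu'.trans hv'.symm
  obtain ⟨m, hm0, hm⟩ := huv
  refine ⟨m, ?_, ?_⟩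
  · have : (0:ℝ) < (m : ℝ) * rv := hm ▸ hru
    have hmpos : (0:ℝ) < (m : ℝ) := by
      by_contra h
      push_neg at h
      nlinarith
    exact_mod_cast hmpos
  · rw [hm]
    field_simp
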